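/- The strict cartesian product of two stable qualification domains is a stable qualification domain: given stable qualification domains D1 and D2, the structure whose carrier is {⊥} ∪ ((D1 \ {⊥1}) × (D2 \ {⊥2})), ordered componentwise with ⊥ below everything, with top (⊤1,⊤2) and componentwise attenuation (and d ∘ ⊥ = ⊥ ∘ d = ⊥), is again a stable qualification domain. -/
import Mathlib


/-- A qualification domain: a bounded lattice with an attenuation operation. -/
class QualDomain (D : Type*) extends Lattice D, BoundedOrder D where
  att : D → D → D
  att_assoc : ∀ a b c : D, att (att a b) c = att a (att b c)
  att_comm : ∀ a b : D, att a b = att b a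
  att_mono : ∀ a b c d : D, a ≤ b → c ≤ d → att a c ≤ att b d
  att_top : ∀ a : D, att a ⊤ = a
  att_bot : ∀ a : D, att a ⊥ = ⊥
  att_le : ∀ a b : D, att a b ≤ b
  att_inf : ∀ a b c : D, att a (b ⊓ c) = att a b ⊓ att a c

open QualDomain

/-- A qualification domain is stable iff attenuation of non-bottom elements is non-bottom. -/
def Stable (D : Type*) [QualDomain D] : Prop :=
  ∀ d e : D, d ≠ ⊥ → e ≠ ⊥ → att d e ≠ ⊥

/-- The non-bottom elements of a qualification domain. -/
abbrev NB (D : Type*) [QualDomain D] := {d : D // d ≠ ⊥}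

section StrictProd

variable {D1 D2 : Type*} [QualDomain D1] [QualDomain D2]

/-- The order of the strict cartesian product: the new bottom (`none`) is below
everything, and pairs of non-bottom elements are compared componentwise. -/
def sLE : Option (NB D1 × NB D2) → Option (NB D1 × NB D2) → Prop
  | none, _ => True
  | some _, none => False
  | some p, some q => p.1.1 ≤ q.1.1 ∧ p.2.1 ≤ q.2.1

open scoped Classical in
/-- The infimum of the strict cartesian product: componentwise on non-bottom
pairs whenever both componentwise infima are non-bottom, and bottom otherwise. -/
noncomputable def sInf : Option (NB D1 × NB D2) → Option (NB D1 × NB D2) → Option (NB D1 × NB D2)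
  | none, _ => none
  | some _, none => none
  | some p, some q =>
      if h : p.1.1 ⊓ q.1.1 ≠ (⊥ : D1) ∧ p.2.1 ⊓ q.2.1 ≠ (⊥ : D2)
      then some (⟨p.1.1 ⊓ q.1.1, h.1⟩, ⟨p.2.1 ⊓ q.2.1, h.2⟩)
      else none

/-- The supremum of the strict cartesian product: componentwise on non-bottom pairs. -/
def sSup : Option (NB D1 × NB D2) → Option (NB D1 × NB D2) → Option (NB D1 × NB D2)
  | none, b => b
  | a, none => a
  | some p, some q =>
      some (⟨p.1.1 ⊔ q.1.1, fun h => p.1.2 (le_bot_iff.mp (le_of_le_of_eq le_sup_left h))⟩,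
            ⟨p.2.1 ⊔ q.2.1, fun h => p.2.2 (le_bot_iff.mp (le_of_le_of_eq le_sup_left h))⟩)

/-- The attenuation of the strict cartesian product of two stable qualification
domains: componentwise on non-bottom pairs, with d ∘ ⊥ = ⊥ ∘ d = ⊥. -/
def sAtt (h1 : Stable D1) (h2 : Stable D2) :
    Option (NB D1 × NB D2) → Option (NB D1 × NB D2) → Option (NB D1 × NB D2)
  | none, _ => none
  | some _, none => none
  | some p, some q =>
      some (⟨att p.1.1 q.1.1, h1 _ _ p.1.2 q.1.2⟩, ⟨att p.2.1 q.2.1, h2 _ _ p.2.2 q.2.2⟩)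

/-- The strict cartesian product of two stable qualification domains is again a
stable qualification domain: `sLE` is a partial order with `sInf` as binary
infimum, `sSup` as binary supremum, `none` as bottom, (⊤,⊤) as top, and the
componentwise attenuation `sAtt` satisfies all qualification-domain axioms and
stability. -/
theorem strict_prod_stable_qualification_domain
    (h1 : Stable D1) (h2 : Stable D2)
    (ht1 : (⊤ : D1) ≠ ⊥) (ht2 : (⊤ : D2) ≠ ⊥) :
    -- partial order
    (∀ a : Option (NB D1 × NB D2), sLE a a) ∧
    (∀ a b c : Option (NB D1 × NB D2), sLE a b → sLE b c → sLE a c) ∧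
    (∀ a b : Option (NB D1 × NB D2), sLE a b → sLE b a → a = b) ∧
    -- lattice: sInf is the greatest lower bound, sSup the least upper bound
    (∀ a b : Option (NB D1 × NB D2), sLE (sInf a b) a ∧ sLE (sInf a b) b ∧
      ∀ c, sLE c a → sLE c b → sLE c (sInf a b)) ∧
    (∀ a b : Option (NB D1 × NB D2), sLE a (sSup a b) ∧ sLE b (sSup a b) ∧
      ∀ c, sLE a c → sLE b c → sLE (sSup a b) c) ∧
    -- bottom and top
    (∀ a : Option (NB D1 × NB D2), sLE none a) ∧
    (∀ a : Option (NB D1 × NB D2), sLE a (some (⟨⊤, ht1⟩, ⟨⊤, ht2⟩))) ∧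
    -- attenuation axioms
    (∀ a b c, sAtt h1 h2 (sAtt h1 h2 a b) c = sAtt h1 h2 a (sAtt h1 h2 b c)) ∧
    (∀ a b, sAtt h1 h2 a b = sAtt h1 h2 b a) ∧
    (∀ a b c d, sLE a b → sLE c d → sLE (sAtt h1 h2 a c) (sAtt h1 h2 b d)) ∧
    (∀ a, sAtt h1 h2 a (some (⟨⊤, ht1⟩, ⟨⊤, ht2⟩)) = a) ∧
    (∀ a, sAtt h1 h2 a none = none) ∧
    (∀ a b, sLE (sAtt h1 h2 a b) b) ∧
    (∀ a b c, sAtt h1 h2 a (sInf b c) = sInf (sAtt h1 h2 a b) (sAtt h1 h2 a c)) ∧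
    -- stability
    (∀ a b, a ≠ none → b ≠ none → sAtt h1 h2 a b ≠ none) := by
  classical
  refine ⟨?_, ?_, ?_, ?_, ?_, ?_, ?_, ?_, ?_, ?_, ?_, ?_, ?_, ?_, ?_⟩
  · rintro (_|p) <;> simp [sLE]
  · rintro (_|p) (_|q) (_|r) hab hbc <;> simp_all [sLE]
    exact ⟨hab.1.trans hbc.1, hab.2.trans hbc.2⟩
  · rintro (_|p) (_|q) hab hba <;> simp_all [sLE]
    exact Prod.ext (Subtype.ext (le_antisymm hab.1 hba.1))
      (Subtype.ext (le_antisymm hab.2 hba.2))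
  · rintro (_|p) (_|q)
    · exact ⟨trivial, trivial, fun c hc _ => by cases c <;> [trivial; exact hc.elim]⟩
    · exact ⟨trivial, trivial, fun c hc _ => by cases c <;> [trivial; exact hc.elim]⟩
    · exact ⟨trivial, trivial, fun c _ hc => by cases c <;> [trivial; exact hc.elim]⟩
    · by_cases h : p.1.1 ⊓ q.1.1 ≠ (⊥ : D1) ∧ p.2.1 ⊓ q.2.1 ≠ (⊥ : D2)
      · refine ⟨?_, ?_, ?_⟩
        · simp only [_root_.sInf, dif_pos h]; exact ⟨inf_le_left, inf_le_left⟩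
        · simp only [_root_.sInf, dif_pos h]; exact ⟨inf_le_right, inf_le_right⟩
        · rintro (_|r) hc hc'
          · trivial
          · simp only [_root_.sInf, dif_pos h]
            exact ⟨le_inf hc.1 hc'.1, le_inf hc.2 hc'.2⟩
      · refine ⟨?_, ?_, ?_⟩
        · simp only [_root_.sInf, dif_neg h]; trivial
        · simp only [_root_.sInf, dif_neg h]; trivial
        · rintro (_|r) hc hc'
          · trivial
          · exfalso
            rw [not_and_or, not_not, not_not] at h
            rcases h with h | h
            · exact r.1.2 (le_bot_iff.mp (le_of_le_of_eq (le_inf hc.1 hc'.1) h))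
            · exact r.2.2 (le_bot_iff.mp (le_of_le_of_eq (le_inf hc.2 hc'.2) h))
  · rintro (_|p) (_|q)
    · exact ⟨trivial, trivial, fun c _ hc => hc⟩
    · exact ⟨trivial, ⟨le_refl _, le_refl _⟩, fun c _ hc => hc⟩
    · exact ⟨⟨le_refl _, le_refl _⟩, trivial, fun c hc _ => hc⟩
    · refine ⟨⟨le_sup_left, le_sup_left⟩, ⟨le_sup_right, le_sup_right⟩, ?_⟩
      rintro (_|r) hc hc'
      · exact hc.elim
      · exact ⟨sup_le hc.1 hc'.1, sup_le hc.2 hc'.2⟩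
  · intro a; trivial
  · rintro (_|p)
    · trivial
    · exact ⟨le_top, le_top⟩
  · rintro (_|p) (_|q) (_|r) <;> simp [sAtt, att_assoc]
  · rintro (_|p) (_|q) <;> simp [sAtt, att_comm]
  · rintro (_|p) (_|q) (_|r) (_|s) hab hcd <;>
      first
        | trivial
        | exact hab.elim
        | exact hcd.elim
        | exact ⟨att_mono _ _ _ _ hab.1 hcd.1, att_mono _ _ _ _ hab.2 hcd.2⟩
  · rintro (_|p) <;> simp [sAtt, att_top]
  · rintro (_|p) <;> rfl
  · rintro (_|p) (_|q) <;> first | trivial | exact ⟨att_le _ _, att_le _ _⟩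
  · rintro (_|p) (_|q) (_|r)
    · rfl
    · rfl
    · rfl
    · rfl
    · rfl
    · simp [sAtt, _root_.sInf]
    · simp [sAtt, _root_.sInf]
    · by_cases h : q.1.1 ⊓ r.1.1 ≠ (⊥ : D1) ∧ q.2.1 ⊓ r.2.1 ≠ (⊥ : D2)
      · have ha1 : att p.1.1 q.1.1 ⊓ att p.1.1 r.1.1 ≠ (⊥ : D1) := by
          rw [← att_inf]; exact h1 _ _ p.1.2 h.1
        have ha2 : att p.2.1 q.2.1 ⊓ att p.2.1 r.2.1 ≠ (⊥ : D2) := by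
          rw [← att_inf]; exact h2 _ _ p.2.2 h.2
        simp only [_root_.sInf, dif_pos h, sAtt, dif_pos (And.intro ha1 ha2)]
        simp [att_inf]
      · rw [not_and_or, not_not, not_not] at h
        have hb : ¬(att p.1.1 q.1.1 ⊓ att p.1.1 r.1.1 ≠ (⊥ : D1) ∧
            att p.2.1 q.2.1 ⊓ att p.2.1 r.2.1 ≠ (⊥ : D2)) := by
          rw [not_and_or, not_not, not_not, ← att_inf, ← att_inf]
          rcases h with h | h
          · exact Or.inl (by rw [h, att_bot])
          · exact Or.inr (by rw [h, att_bot])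
        have h' : ¬(q.1.1 ⊓ r.1.1 ≠ (⊥ : D1) ∧ q.2.1 ⊓ r.2.1 ≠ (⊥ : D2)) := by
          rw [not_and_or, not_not, not_not]; exact h
        simp only [_root_.sInf, dif_neg h', sAtt, dif_neg hb]
  · rintro (_|p) (_|q) <;> simp [sAtt]


end StrictProd
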